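/- Under the abstract variational framework, let γ₁, γ₂ : X → ℝ be bounded measurable with 0 ≤ γ₁ ≤ γ₂ μ-a.e., let ℓ : V → ℝ be a linear functional, and let u₁, u₂ ∈ V be weak solutions for (γ₁, ℓ) and (γ₂, ℓ) respectively. Then ℓ(u₂) ≤ ℓ(u₁). (This is Corollary 4.2, the monotonicity of the Neumann-to-Dirichlet map: γ₁ ≤ γ₂ implies Λ(γ₁) ≥ Λ(γ₂) in the sense of quadratic forms.) -/

import Mathlib

open MeasureTheory

theorem mul_integrable_of_memL2 {X : Type*} [MeasurableSpace X] {μ : Measure X}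
    {f g : X → ℝ} (hf : MemLp f 2 μ) (hg : MemLp g 2 μ) :
    Integrable (fun x => f x * g x) μ := by
  have h1 : Integrable (fun x => (f x + g x) ^ 2) μ := (hf.add hg).integrable_sq
  have h2 : Integrable (fun x => f x ^ 2) μ := hf.integrable_sq
  have h3 : Integrable (fun x => g x ^ 2) μ := hg.integrable_sq
  have : (fun x => f x * g x)
      = fun x => ((f x + g x) ^ 2 - f x ^ 2 - g x ^ 2) / 2 := by
    funext x; ring
  rw [this]
  exact ((h1.sub h2).sub h3).div_const 2

/-- Monotonicity of the Neumann-to-Dirichlet map (Corollary 4.2):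
if `0 ≤ γ₁ ≤ γ₂` μ-a.e., then `ℓ(u₂) ≤ ℓ(u₁)`. -/
theorem nd_map_monotone
    {V : Type*} [AddCommGroup V] [Module ℝ V]
    {X : Type*} [MeasurableSpace X] {μ : Measure X}
    (a : V → V → ℝ)
    (ha_symm : ∀ v w, a v w = a w v)
    (ha_add : ∀ u v w, a (u + v) w = a u w + a v w)
    (ha_smul : ∀ (c : ℝ) (v w : V), a (c • v) w = c * a v w)
    (ha_nonneg : ∀ v, 0 ≤ a v v)
    (T : V →ₗ[ℝ] (X → ℝ))
    (hT : ∀ v, MemLp (T v) 2 μ)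
    (γ₁ γ₂ : X → ℝ)
    (hγ₁m : Measurable γ₁) (hγ₂m : Measurable γ₂)
    (hγ₁b : ∃ C, ∀ x, |γ₁ x| ≤ C) (hγ₂b : ∃ C, ∀ x, |γ₂ x| ≤ C)
    (hγ₁0 : ∀ᵐ x ∂μ, 0 ≤ γ₁ x)
    (hγ₁₂ : ∀ᵐ x ∂μ, γ₁ x ≤ γ₂ x)
    (ℓ : V →ₗ[ℝ] ℝ)
    (u₁ u₂ : V)
    (hu₁ : ∀ w, a u₁ w + ∫ x, γ₁ x * T u₁ x * T w x ∂μ = ℓ w)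
    (hu₂ : ∀ w, a u₂ w + ∫ x, γ₂ x * T u₂ x * T w x ∂μ = ℓ w) :
    ℓ u₂ ≤ ℓ u₁ := by
  -- integrability of γ * Tv * Tw
  have hint : ∀ (γ : X → ℝ), Measurable γ → (∃ C, ∀ x, |γ x| ≤ C) → ∀ v w : V,
      Integrable (fun x => γ x * (T v x * T w x)) μ := by
    intro γ hγm hγb v w
    obtain ⟨C, hC⟩ := hγb
    exact (mul_integrable_of_memL2 (hT v) (hT w)).bdd_mul
      hγm.aestronglyMeasurable (ae_of_all _ fun x => by simpa using hC x)
  -- bilinearity of a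
  have hsub : ∀ v w z : V, a (v - w) z = a v z - a w z := by
    intro v w z
    have h : v - w = v + (-1 : ℝ) • w := by
      simp [sub_eq_add_neg]
    rw [h, ha_add, ha_smul]; ring
  have hsub' : ∀ v w z : V, a z (v - w) = a z v - a z w := by
    intro v w z; rw [ha_symm, hsub, ha_symm v z, ha_symm w z]
  set u := u₁ - u₂ with hu
  have hTu : ∀ x, T u x = T u₁ x - T u₂ x := by
    intro x; rw [hu, map_sub]; rfl
  -- expand a (u₁ - u₂) (u₁ - u₂)
  have haexp : a u u = a u₁ u₁ - a u₁ u₂ - a u₂ u₁ + a u₂ u₂ := by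
    rw [hu, hsub, hsub', hsub']; ring
  -- expand the integral
  have i11 := hint γ₁ hγ₁m hγ₁b u₁ u₁
  have i12 := hint γ₁ hγ₁m hγ₁b u₁ u₂
  have i22 := hint γ₁ hγ₁m hγ₁b u₂ u₂
  have i22' := hint γ₂ hγ₂m hγ₂b u₂ u₂
  have hIexp : ∫ x, γ₁ x * (T u x * T u x) ∂μ
      = (∫ x, γ₁ x * (T u₁ x * T u₁ x) ∂μ)
        - 2 * (∫ x, γ₁ x * (T u₁ x * T u₂ x) ∂μ)
        + ∫ x, γ₁ x * (T u₂ x * T u₂ x) ∂μ := by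
    have heq : (fun x => γ₁ x * (T u x * T u x))
        = fun x => (γ₁ x * (T u₁ x * T u₁ x) - (2 : ℝ) * (γ₁ x * (T u₁ x * T u₂ x)))
            + γ₁ x * (T u₂ x * T u₂ x) := by
      funext x; rw [hTu]; ring
    have isub : Integrable
        (fun x => γ₁ x * (T u₁ x * T u₁ x) - 2 * (γ₁ x * (T u₁ x * T u₂ x))) μ :=
      i11.sub (i12.const_mul 2)
    rw [heq, integral_add isub i22, integral_sub i11 (i12.const_mul 2), integral_const_mul]
  -- nonnegativity of the γ₁ quadratic term
  have hpos : 0 ≤ ∫ x, γ₁ x * (T u x * T u x) ∂μ := by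
    apply integral_nonneg_of_ae
    filter_upwards [hγ₁0] with x hx
    exact mul_nonneg hx (mul_self_nonneg _)
  -- monotone comparison γ₁ ≤ γ₂ on the square term
  have hmono : ∫ x, γ₁ x * (T u₂ x * T u₂ x) ∂μ ≤ ∫ x, γ₂ x * (T u₂ x * T u₂ x) ∂μ := by
    apply integral_mono_ae i22 i22'
    filter_upwards [hγ₁₂] with x hx
    exact mul_le_mul_of_nonneg_right hx (mul_self_nonneg _)
  -- weak solution identities
  have e1 : a u₁ u₁ + ∫ x, γ₁ x * (T u₁ x * T u₁ x) ∂μ = ℓ u₁ := by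
    have := hu₁ u₁; simpa [mul_assoc] using this
  have e2 : a u₁ u₂ + ∫ x, γ₁ x * (T u₁ x * T u₂ x) ∂μ = ℓ u₂ := by
    have := hu₁ u₂; simpa [mul_assoc] using this
  have e3 : a u₂ u₂ + ∫ x, γ₂ x * (T u₂ x * T u₂ x) ∂μ = ℓ u₂ := by
    have := hu₂ u₂; simpa [mul_assoc] using this
  have hsymm12 : a u₂ u₁ = a u₁ u₂ := ha_symm u₂ u₁
  have hq := ha_nonneg u
  -- combine: 0 ≤ a u u + ∫ γ₁ (Tu)² ≤ ℓ u₁ - ℓ u₂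
  nlinarith [haexp, hIexp, hpos, hmono, e1, e2, e3, hq]
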